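/- Let G be a finite connected simple graph with e ≥ 1 edges and let ρ be a rotation system for G. Then the map-automorphism group Γ_ρ(G) acts freely on the set of 2e darts of G (ordered pairs (u,w) of adjacent vertices), so the order of Γ_ρ(G) divides 2e; moreover, if |Γ_ρ(G)| = 2e, then Γ_ρ(G) acts transitively on the darts, and hence transitively on the vertices and on the edges of G. -/

import Mathlib

/-- A rotation system for a simple graph `G`. -/
def IsRotationSystem {V : Type*} (G : SimpleGraph V) (ρ : V → Equiv.Perm V) : Prop :=
  ∀ v : V, (ρ v).IsCycleOn (G.neighborSet v) ∧ ∀ w : V, w ∉ G.neighborSet v → ρ v w = w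

/-- The action of a permutation `γ` on rotation systems: `(γ·ρ)_{γ(v)} = γ ∘ ρ_v ∘ γ⁻¹`. -/
def rotAct {V : Type*} (γ : Equiv.Perm V) (ρ : V → Equiv.Perm V) : V → Equiv.Perm V :=
  fun w => γ * ρ (γ⁻¹ w) * γ⁻¹

/-- The automorphism group `Γ(G)` of a simple graph, as a set of permutations. -/
def autSet {V : Type*} (G : SimpleGraph V) : Set (Equiv.Perm V) :=
  {γ | ∀ u w : V, G.Adj (γ u) (γ w) ↔ G.Adj u w}

section Aux

variable {V : Type*} (G : SimpleGraph V) (ρ : V → Equiv.Perm V)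

lemma rotAct_one : rotAct 1 ρ = ρ := by
  funext w; simp [rotAct]

lemma rotAct_mul (a b : Equiv.Perm V) :
    rotAct (a * b) ρ = rotAct a (rotAct b ρ) := by
  funext w
  simp [rotAct, mul_assoc, Equiv.Perm.mul_apply]

/-- The map-automorphism group as a subgroup of `Perm V`. -/
def mapAut : Subgroup (Equiv.Perm V) where
  carrier := {γ ∈ autSet G | rotAct γ ρ = ρ}
  one_mem' := by
    refine ⟨fun u w => by simp, rotAct_one ρ⟩
  mul_mem' := by
    rintro a b ⟨ha1, ha2⟩ ⟨hb1, hb2⟩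
    refine ⟨fun u w => by rw [Equiv.Perm.mul_apply, Equiv.Perm.mul_apply, ha1, hb1], ?_⟩
    rw [rotAct_mul, hb2, ha2]
  inv_mem' := by
    rintro a ⟨ha1, ha2⟩
    refine ⟨fun u w => ?_, ?_⟩
    · conv_rhs => rw [← Equiv.apply_symm_apply a u, ← Equiv.apply_symm_apply a w]
      rw [ha1]
      rfl
    · have : rotAct a⁻¹ (rotAct a ρ) = ρ := by
        rw [← rotAct_mul, inv_mul_cancel, rotAct_one]
      rw [ha2] at this
      exact this

variable {G ρ}

/-- If a map automorphism fixes one dart, it is the identity. -/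
lemma fix_dart_eq_one (hG : G.Connected) (hρ : IsRotationSystem G ρ)
    {γ : Equiv.Perm V} (_hγa : γ ∈ autSet G) (hγρ : rotAct γ ρ = ρ)
    {u w : V} (hadj : G.Adj u w) (hu : γ u = u) (hw : γ w = w) : γ = 1 := by
  -- key step: if γ fixes adjacent v, x then it fixes all neighbors of v
  have key : ∀ v x, γ v = v → γ x = x → G.Adj v x → ∀ y, G.Adj v y → γ y = y := by
    intro v x hv hx hvx y hvy
    have hvinv : γ⁻¹ v = v := by
      conv_lhs => rw [← hv]
      simp
    have h1 : γ * ρ v * γ⁻¹ = ρ v := by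
      have := congrFun hγρ v
      rw [rotAct, hvinv] at this
      exact this
    have hcomm : Commute γ (ρ v) := by
      have := congrArg (· * γ) h1
      simp [mul_assoc] at this
      exact this
    obtain ⟨k, hk⟩ := (hρ v).1.2 (by exact hvx) (by exact hvy)
    have h2 : Commute γ ((ρ v) ^ k) := hcomm.zpow_right k
    calc γ y = γ (((ρ v) ^ k) x) := by rw [hk]
      _ = ((ρ v) ^ k) (γ x) := by
          rw [← Equiv.Perm.mul_apply, h2.eq, Equiv.Perm.mul_apply]
      _ = y := by rw [hx, hk]
  have step : ∀ a b, G.Adj a b → (γ a = a ∧ ∀ y, G.Adj a y → γ y = y) →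
      (γ b = b ∧ ∀ y, G.Adj b y → γ y = y) := by
    rintro a b hab ⟨ha, hNa⟩
    have hb : γ b = b := hNa b hab
    exact ⟨hb, key b a hb ha hab.symm⟩
  have walkP : ∀ {a b : V} (_ : G.Walk a b),
      (γ a = a ∧ ∀ y, G.Adj a y → γ y = y) → (γ b = b ∧ ∀ y, G.Adj b y → γ y = y) := by
    intro a b p
    induction p with
    | nil => exact id
    | cons h q ih => exact fun hA => ih (step _ _ h hA)
  have start : γ u = u ∧ ∀ y, G.Adj u y → γ y = y := ⟨hu, key u w hu hw hadj⟩
  ext v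
  obtain ⟨p⟩ := hG.preconnected u v
  exact (walkP p start).1

end Aux

/-- Theorem: the map-automorphism group `Γ_ρ(G)` of a connected graph with `e ≥ 1` edges acts
freely on the `2e` darts (ordered pairs of adjacent vertices), hence its order divides `2e`;
moreover if its order equals `2e` then it acts transitively on darts, and hence transitively on
the vertices and on the edges. -/
theorem map_automorphism_group_order_divides {V : Type*} [Fintype V] [DecidableEq V]
    (G : SimpleGraph V) (hG : G.Connected) (e : ℕ) (he : G.edgeSet.ncard = e) (he1 : 1 ≤ e)
    (ρ : V → Equiv.Perm V) (hρ : IsRotationSystem G ρ) :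
    (∀ γ ∈ {γ ∈ autSet G | rotAct γ ρ = ρ}, γ ≠ 1 →
        ∀ p : V × V, G.Adj p.1 p.2 → (γ p.1, γ p.2) ≠ p) ∧
      ({γ ∈ autSet G | rotAct γ ρ = ρ}).ncard ∣ 2 * e ∧
      (({γ ∈ autSet G | rotAct γ ρ = ρ}).ncard = 2 * e →
        (∀ p q : V × V, G.Adj p.1 p.2 → G.Adj q.1 q.2 →
            ∃ γ ∈ {γ ∈ autSet G | rotAct γ ρ = ρ}, (γ p.1, γ p.2) = q) ∧
          (∀ u w : V, ∃ γ ∈ {γ ∈ autSet G | rotAct γ ρ = ρ}, γ u = w) ∧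
          (∀ e₁ ∈ G.edgeSet, ∀ e₂ ∈ G.edgeSet,
            ∃ γ ∈ {γ ∈ autSet G | rotAct γ ρ = ρ}, Sym2.map (⇑γ) e₁ = e₂)) := by
  classical
  set S : Set (Equiv.Perm V) := {γ ∈ autSet G | rotAct γ ρ = ρ} with hS
  set Γ : Subgroup (Equiv.Perm V) := mapAut G ρ with hΓ
  have hSΓ : S = ↑Γ := rfl
  -- the dart type
  let D := {p : V × V // G.Adj p.1 p.2}
  -- the action of Γ on D
  letI : SMul Γ D := ⟨fun g p => ⟨((g : Equiv.Perm V) p.1.1, (g : Equiv.Perm V) p.1.2),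
    (g.2.1 p.1.1 p.1.2).mpr p.2⟩⟩
  letI : MulAction Γ D :=
    { one_smul := fun p => by
        apply Subtype.ext
        rfl
      mul_smul := fun g h p => by
        apply Subtype.ext
        rfl }
  have smul_def : ∀ (g : Γ) (p : D),
      (g • p : D).1 = ((g : Equiv.Perm V) p.1.1, (g : Equiv.Perm V) p.1.2) := fun _ _ => rfl
  -- freeness
  have free : ∀ (g : Γ) (p : D), g • p = p → g = 1 := by
    intro g p hgp
    have h1 : (g : Equiv.Perm V) p.1.1 = p.1.1 ∧ (g : Equiv.Perm V) p.1.2 = p.1.2 := by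
      have := congrArg Subtype.val hgp
      rw [smul_def] at this
      exact ⟨congrArg Prod.fst this, congrArg Prod.snd this⟩
    have := fix_dart_eq_one hG hρ g.2.1 g.2.2 p.2 h1.1 h1.2
    exact Subtype.ext this
  have stab_bot : ∀ p : D, MulAction.stabilizer Γ p = ⊥ := by
    intro p
    rw [Subgroup.eq_bot_iff_forall]
    intro g hg
    exact free g p hg
  -- cardinality of darts
  have cardD : Nat.card D = 2 * e := by
    have eqv : D ≃ G.Dart :=
      { toFun := fun p => ⟨p.1, p.2⟩
        invFun := fun d => ⟨d.toProd, d.adj⟩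
        left_inv := fun p => rfl
        right_inv := fun d => rfl }
    rw [Nat.card_congr eqv, Nat.card_eq_fintype_card, G.dart_card_eq_twice_card_edges]
    rw [← Set.ncard_coe_finset, SimpleGraph.coe_edgeFinset, he]
  -- orbit of any dart has the cardinality of Γ
  have card_orbit : ∀ p : D, Nat.card (MulAction.orbit Γ p) = Nat.card Γ := by
    intro p
    have e1 := MulAction.orbitEquivQuotientStabilizer Γ p
    rw [Nat.card_congr e1, Nat.card_congr (Subgroup.quotientEquivOfEq (stab_bot p)),
      Nat.card_congr (QuotientGroup.quotientBot (G := Γ)).toEquiv]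
  -- class formula: card D = (number of orbits) * card Γ
  have classf : Nat.card D =
      Nat.card (MulAction.orbitRel.Quotient Γ D) * Nat.card Γ := by
    have e1 := MulAction.selfEquivSigmaOrbits Γ D
    rw [Nat.card_congr e1, Nat.card_eq_fintype_card, Fintype.card_sigma]
    have horb : ∀ ω : MulAction.orbitRel.Quotient Γ D,
        Fintype.card (MulAction.orbit Γ (Quotient.out ω)) = Nat.card Γ := fun ω => by
      rw [← Nat.card_eq_fintype_card, card_orbit]
    simp_rw [horb]
    rw [Finset.sum_const, Finset.card_univ, smul_eq_mul, Nat.card_eq_fintype_card, Nat.card_eq_fintype_card]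
  have hScard : S.ncard = Nat.card Γ := by
    rw [← Nat.card_coe_set_eq, hSΓ]
    rfl
  refine ⟨?_, ?_, ?_⟩
  · -- freeness statement
    rintro γ hγ hne p hadj hfix
    exact hne (Subtype.ext_iff.mp
      (free ⟨γ, hγ⟩ ⟨p, hadj⟩ (Subtype.ext hfix)))
  · rw [hScard, ← cardD, classf]
    exact dvd_mul_left _ _
  · intro hcard
    have hcardΓ : Nat.card Γ = Nat.card D := by
      rw [← hScard, hcard, cardD]
    -- transitivity on darts (as the subtype)
    have trans : ∀ p q : D, ∃ g : Γ, g • p = q := by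
      intro p q
      have horb : MulAction.orbit Γ p = Set.univ := by
        apply Set.eq_of_subset_of_ncard_le (Set.subset_univ _) ?_ Set.finite_univ
        rw [Set.ncard_univ, ← Nat.card_coe_set_eq, card_orbit p, hcardΓ]
      have : q ∈ MulAction.orbit Γ p := by rw [horb]; trivial
      exact this
    have trans' : ∀ p q : V × V, G.Adj p.1 p.2 → G.Adj q.1 q.2 →
        ∃ γ ∈ S, (γ p.1, γ p.2) = q := by
      intro p q hp hq
      obtain ⟨g, hg⟩ := trans ⟨p, hp⟩ ⟨q, hq⟩
      refine ⟨(g : Equiv.Perm V), g.2, ?_⟩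
      have := congrArg Subtype.val hg
      rw [smul_def] at this
      exact this
    -- each vertex has a neighbor
    have hnb : ∀ v : V, ∃ x, G.Adj v x := by
      have hne : G.edgeSet.Nonempty := by
        apply Set.nonempty_of_ncard_ne_zero
        omega
      obtain ⟨E, hE⟩ := hne
      induction E with
      | h a b =>
        rw [SimpleGraph.mem_edgeSet] at hE
        intro v
        obtain ⟨p⟩ := hG.preconnected v a
        cases p with
        | nil => exact ⟨b, hE⟩
        | cons h _ => exact ⟨_, h⟩
    refine ⟨trans', ?_, ?_⟩
    · intro u w
      obtain ⟨u', hu'⟩ := hnb u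
      obtain ⟨w', hw'⟩ := hnb w
      obtain ⟨γ, hγ, hγp⟩ := trans' (u, u') (w, w') hu' hw'
      exact ⟨γ, hγ, congrArg Prod.fst hγp⟩
    · intro e₁ he₁ e₂ he₂
      induction e₁ with
      | h a b =>
        induction e₂ with
        | h c d =>
          rw [SimpleGraph.mem_edgeSet] at he₁ he₂
          obtain ⟨γ, hγ, hγp⟩ := trans' (a, b) (c, d) he₁ he₂
          refine ⟨γ, hγ, ?_⟩
          rw [Sym2.map_pair_eq]
          rw [Prod.mk.injEq] at hγp
          rw [hγp.1, hγp.2]
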